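/- If the operator-norm difference of state transition operators is bounded by a Lipschitz condition ‖P* − P‖ ≤ L·κ, and the visitation measures are ρ* = (∑_{t≥0} γ^t (P*)^t)δ and ρ = (∑_{t≥0} γ^t P^t)δ with ‖δ‖ ≤ 1, then ‖ρ* − ρ‖ ≤ (γL/(1−γ)²)·κ. -/

import Mathlib

private lemma pow_norm_le_one {X : Type*} [NormedAddCommGroup X] [NormedSpace ℝ X]
    (Q : X →L[ℝ] X) (hQ : ‖Q‖ ≤ 1) (t : ℕ) : ‖Q ^ t‖ ≤ 1 := by
  cases t with
  | zero => rw [pow_zero]; exact ContinuousLinearMap.norm_id_le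
  | succ n =>
    calc ‖Q ^ (n+1)‖ ≤ ‖Q‖ ^ (n+1) := norm_pow_le' _ (Nat.succ_pos n)
      _ ≤ 1 ^ (n+1) := pow_le_pow_left₀ (norm_nonneg _) hQ _
      _ = 1 := one_pow _

private lemma pow_diff_bound {X : Type*} [NormedAddCommGroup X] [NormedSpace ℝ X]
    (P Pstar : X →L[ℝ] X) (hP : ‖P‖ ≤ 1) (hPstar : ‖Pstar‖ ≤ 1) :
    ∀ t : ℕ, ‖Pstar ^ t - P ^ t‖ ≤ (t : ℝ) * ‖Pstar - P‖ := by
  intro t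
  induction t with
  | zero => simp
  | succ n ih =>
    have key : Pstar ^ (n+1) - P ^ (n+1)
        = Pstar * (Pstar ^ n - P ^ n) + (Pstar - P) * P ^ n := by
      simp only [pow_succ', mul_sub, sub_mul]
      abel
    rw [key]
    calc ‖Pstar * (Pstar ^ n - P ^ n) + (Pstar - P) * P ^ n‖
        ≤ ‖Pstar * (Pstar ^ n - P ^ n)‖ + ‖(Pstar - P) * P ^ n‖ := norm_add_le _ _
      _ ≤ ‖Pstar‖ * ‖Pstar ^ n - P ^ n‖ + ‖Pstar - P‖ * ‖P ^ n‖ :=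
          add_le_add (norm_mul_le _ _) (norm_mul_le _ _)
      _ ≤ 1 * ((n : ℝ) * ‖Pstar - P‖) + ‖Pstar - P‖ * 1 :=
          add_le_add
            (mul_le_mul hPstar ih (norm_nonneg _) zero_le_one)
            (mul_le_mul_of_nonneg_left (pow_norm_le_one P hP n) (norm_nonneg _))
      _ = ((n : ℝ) + 1) * ‖Pstar - P‖ := by ring
      _ = ((n + 1 : ℕ) : ℝ) * ‖Pstar - P‖ := by push_cast; ring

theorem stmt_19 {X : Type*} [NormedAddCommGroup X] [NormedSpace ℝ X] [CompleteSpace X]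
    (P Pstar : X →L[ℝ] X) (hP : ‖P‖ ≤ 1) (hPstar : ‖Pstar‖ ≤ 1)
    (γ : ℝ) (hγ0 : 0 ≤ γ) (hγ1 : γ < 1)
    (L κ : ℝ) (hL : 0 ≤ L) (hκ : 0 ≤ κ)
    (hLip : ‖Pstar - P‖ ≤ L * κ)
    (δ : X) (hδ : ‖δ‖ ≤ 1) :
    ∃ ρstar ρ : X,
      HasSum (fun t : ℕ => γ ^ t • (Pstar ^ t) δ) ρstar ∧
      HasSum (fun t : ℕ => γ ^ t • (P ^ t) δ) ρ ∧
      ‖ρstar - ρ‖ ≤ γ * L / (1 - γ) ^ 2 * κ := by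
  have hγabs : ‖γ‖ < 1 := by rw [Real.norm_eq_abs, abs_of_nonneg hγ0]; exact hγ1
  have hgeom : Summable fun t : ℕ => γ ^ t := summable_geometric_of_lt_one hγ0 hγ1
  have hbound : ∀ (Q : X →L[ℝ] X), ‖Q‖ ≤ 1 →
      Summable fun t : ℕ => γ ^ t • (Q ^ t) δ := by
    intro Q hQ
    apply Summable.of_norm
    apply hgeom.of_nonneg_of_le (fun t => norm_nonneg _)
    intro t
    rw [norm_smul, Real.norm_eq_abs, abs_of_nonneg (pow_nonneg hγ0 t)]
    have h2 : ‖(Q ^ t) δ‖ ≤ 1 :=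
      le_trans ((Q ^ t).le_opNorm δ)
        (mul_le_one₀ (pow_norm_le_one Q hQ t) (norm_nonneg _) hδ)
    calc γ ^ t * ‖(Q ^ t) δ‖ ≤ γ ^ t * 1 :=
          mul_le_mul_of_nonneg_left h2 (pow_nonneg hγ0 t)
      _ = γ ^ t := mul_one _
  obtain ⟨ρstar, hρstar⟩ := (hbound Pstar hPstar)
  obtain ⟨ρ, hρ⟩ := (hbound P hP)
  refine ⟨ρstar, ρ, hρstar, hρ, ?_⟩
  have hdiff : HasSum (fun t : ℕ => γ ^ t • ((Pstar ^ t) δ - (P ^ t) δ)) (ρstar - ρ) := by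
    simpa [smul_sub] using hρstar.sub hρ
  have hmaj : HasSum (fun t : ℕ => (t : ℝ) * γ ^ t * (L * κ)) (γ / (1 - γ) ^ 2 * (L * κ)) := by
    have := hasSum_coe_mul_geometric_of_norm_lt_one (𝕜 := ℝ) hγabs
    simpa using this.mul_right (L * κ)
  have hle : ∀ t : ℕ, ‖γ ^ t • ((Pstar ^ t) δ - (P ^ t) δ)‖ ≤ (t : ℝ) * γ ^ t * (L * κ) := by
    intro t
    rw [norm_smul, Real.norm_eq_abs, abs_of_nonneg (pow_nonneg hγ0 t)]
    have h1 : ‖(Pstar ^ t) δ - (P ^ t) δ‖ ≤ (t : ℝ) * (L * κ) := by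
      calc ‖(Pstar ^ t) δ - (P ^ t) δ‖
          ≤ ‖Pstar ^ t - P ^ t‖ * ‖δ‖ := by
            simpa using (Pstar ^ t - P ^ t).le_opNorm δ
        _ ≤ ((t : ℝ) * ‖Pstar - P‖) * 1 :=
            mul_le_mul (pow_diff_bound P Pstar hP hPstar t) hδ (norm_nonneg _)
              (mul_nonneg (Nat.cast_nonneg t) (norm_nonneg _))
        _ = (t : ℝ) * ‖Pstar - P‖ := mul_one _
        _ ≤ (t : ℝ) * (L * κ) :=
            mul_le_mul_of_nonneg_left hLip (Nat.cast_nonneg t)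
    calc γ ^ t * ‖(Pstar ^ t) δ - (P ^ t) δ‖
        ≤ γ ^ t * ((t : ℝ) * (L * κ)) :=
          mul_le_mul_of_nonneg_left h1 (pow_nonneg hγ0 t)
      _ = (t : ℝ) * γ ^ t * (L * κ) := by ring
  calc ‖ρstar - ρ‖ ≤ γ / (1 - γ) ^ 2 * (L * κ) := hdiff.norm_le_of_bounded hmaj hle
    _ = γ * L / (1 - γ) ^ 2 * κ := by ring
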